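/- Let (X,d) be a metric space, C_b(X) the Banach space of bounded continuous real-valued functions on X with the supremum norm, and Γ : C_b(X) → ℝ a pressure function. For every continuous linear functional L on C_b(X) that is positive (L(ψ) ≥ 0 whenever ψ ≥ 0) and normalized (L(1) = 1), set 𝔥(L) = inf { L(φ) : φ ∈ C_b(X), Γ(−φ) ≤ 0 }. Then for every φ ∈ C_b(X) the supremum of 𝔥(L) + L(φ) over all positive normalized continuous linear functionals L on C_b(X) is attained, and Γ(φ) = max_L { 𝔥(L) + L(φ) }. -/

import Mathlib

open MeasureTheory BoundedContinuousFunction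

set_option maxHeartbeats 1000000

/-- A pressure function on the bounded continuous functions `C_b(X)` of a metric space:
monotone, translation invariant and convex. -/
def IsPressureFunctionCb {X : Type*} [MetricSpace X] (Γ : (X →ᵇ ℝ) → ℝ) : Prop :=
  (∀ φ ψ : X →ᵇ ℝ, (∀ x, φ x ≤ ψ x) → Γ φ ≤ Γ ψ) ∧
  (∀ (φ : X →ᵇ ℝ) (c : ℝ), Γ (φ + BoundedContinuousFunction.const X c) = Γ φ + c) ∧
  ConvexOn ℝ Set.univ Γ

/-- A positive normalized continuous linear functional on `C_b(X)`; these correspond to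
regular finitely additive probability measures on the Borel σ-algebra of `X`. -/
def IsPosNormalized {X : Type*} [MetricSpace X] (L : (X →ᵇ ℝ) →L[ℝ] ℝ) : Prop :=
  (∀ ψ : X →ᵇ ℝ, (∀ x, 0 ≤ ψ x) → 0 ≤ L ψ) ∧ L 1 = 1

/-- The entropy-like value of a positive normalized functional:
`𝔥(L) = inf { L(φ) : φ ∈ C_b(X), Γ(−φ) ≤ 0 }`, valued in `EReal`. -/
noncomputable def entropyLikeCb {X : Type*} [MetricSpace X]
    (Γ : (X →ᵇ ℝ) → ℝ) (L : (X →ᵇ ℝ) →L[ℝ] ℝ) : EReal :=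
  sInf { r : EReal | ∃ φ : X →ᵇ ℝ, Γ (-φ) ≤ 0 ∧ r = ((L φ : ℝ) : EReal) }

lemma const_eq_smul_one {X : Type*} [MetricSpace X] (c : ℝ) :
    BoundedContinuousFunction.const X c = c • (1 : X →ᵇ ℝ) := by
  ext x; simp

/-- Lipschitz continuity of a pressure function. -/
lemma IsPressureFunctionCb.continuous {X : Type*} [MetricSpace X] [Nonempty X]
    {Γ : (X →ᵇ ℝ) → ℝ} (hΓ : IsPressureFunctionCb Γ) : Continuous Γ := by
  obtain ⟨hmono, htrans, _⟩ := hΓ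
  have key : ∀ φ ψ : X →ᵇ ℝ, Γ φ - Γ ψ ≤ dist φ ψ := by
    intro φ ψ
    have h1 : ∀ x, φ x ≤ (ψ + BoundedContinuousFunction.const X (dist φ ψ)) x := by
      intro x
      have := BoundedContinuousFunction.dist_coe_le_dist (f := φ) (g := ψ) x
      have := abs_le.1 (by rwa [Real.dist_eq] at this)
      simp only [BoundedContinuousFunction.coe_add, Pi.add_apply,
        BoundedContinuousFunction.const_apply]
      linarith [this.2]
    have := hmono _ _ h1
    rw [htrans] at this
    linarith
  have : LipschitzWith 1 Γ := by
    refine LipschitzWith.of_dist_le_mul fun φ ψ => ?_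
    rw [Real.dist_eq, NNReal.coe_one, one_mul, abs_le]
    constructor
    · have := key ψ φ; rw [dist_comm] at this; linarith
    · linarith [key φ ψ]
  exact this.continuous

/-- Existence of a subgradient, which is positive and normalized. -/
lemma exists_subgradient {X : Type*} [MetricSpace X] [Nonempty X]
    {Γ : (X →ᵇ ℝ) → ℝ} (hΓ : IsPressureFunctionCb Γ) (φ : X →ᵇ ℝ) :
    ∃ L : (X →ᵇ ℝ) →L[ℝ] ℝ, IsPosNormalized L ∧
      ∀ χ : X →ᵇ ℝ, Γ φ + (L χ - L φ) ≤ Γ χ := by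
  have hcont := hΓ.continuous
  obtain ⟨hmono, htrans, hconv⟩ := hΓ
  set S : Set ((X →ᵇ ℝ) × ℝ) := {p | Γ p.1 < p.2} with hS
  have hSopen : IsOpen S := isOpen_lt (hcont.comp continuous_fst) continuous_snd
  have hSconv : Convex ℝ S := by
    intro p hp q hq a b ha hb hab
    simp only [hS, Set.mem_setOf_eq] at hp hq ⊢
    have h1 : Γ (a • p.1 + b • q.1) ≤ a * Γ p.1 + b * Γ q.1 := by
      have := hconv.2 (Set.mem_univ p.1) (Set.mem_univ q.1) ha hb hab
      simpa [smul_eq_mul] using this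
    have hp2 : (a • p + b • q).2 = a * p.2 + b * q.2 := rfl
    have hp1 : (a • p + b • q).1 = a • p.1 + b • q.1 := rfl
    rw [hp1, hp2]
    rcases ha.eq_or_lt with rfl | ha'
    · have hb1 : b = 1 := by linarith
      simp only [zero_mul, zero_add]
      calc Γ (0 • p.1 + b • q.1) ≤ 0 * Γ p.1 + b * Γ q.1 := h1
        _ = b * Γ q.1 := by ring
        _ < b * q.2 := by rw [hb1]; simpa using hq
    · calc Γ (a • p.1 + b • q.1) ≤ a * Γ p.1 + b * Γ q.1 := h1
        _ < a * p.2 + b * q.2 := by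
            have h2 : a * Γ p.1 < a * p.2 := mul_lt_mul_of_pos_left hp ha'
            have h3 : b * Γ q.1 ≤ b * q.2 := mul_le_mul_of_nonneg_left hq.le hb
            linarith
  have hnotmem : (φ, Γ φ) ∉ S := by simp [hS]
  obtain ⟨f, hf⟩ := geometric_hahn_banach_point_open hSconv hSopen hnotmem
  set g : (X →ᵇ ℝ) →L[ℝ] ℝ := f.comp (ContinuousLinearMap.inl ℝ (X →ᵇ ℝ) ℝ) with hg
  set c : ℝ := f (0, 1) with hcdef
  have hdecomp : ∀ (χ : X →ᵇ ℝ) (t : ℝ), f (χ, t) = g χ + t * c := by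
    intro χ t
    have : (χ, t) = (χ, 0) + t • ((0 : X →ᵇ ℝ), (1 : ℝ)) := by
      simp [Prod.ext_iff]
    rw [this, map_add, f.map_smul]
    simp [hg, hcdef, smul_eq_mul, ContinuousLinearMap.inl_apply]
  have hc : 0 < c := by
    have := hf (φ, Γ φ + 1) (by simp [hS])
    rw [hdecomp, hdecomp] at this
    linarith
  -- key inequality: f(φ, Γφ) ≤ f(χ, Γχ)
  have hkey : ∀ χ : X →ᵇ ℝ, g φ + Γ φ * c ≤ g χ + Γ χ * c := by
    intro χ
    have h : ∀ ε > (0 : ℝ), g φ + Γ φ * c < (g χ + Γ χ * c) + ε := by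
      intro ε hε
      have := hf (χ, Γ χ + ε / c) (by simp [hS, div_pos hε hc])
      rw [hdecomp, hdecomp] at this
      have hεc : (Γ χ + ε / c) * c = Γ χ * c + ε := by
        field_simp
      rw [hεc] at this
      linarith
    exact le_of_forall_pos_lt_add h
  set L : (X →ᵇ ℝ) →L[ℝ] ℝ := (-(c⁻¹)) • g with hL
  have hLval : ∀ χ : X →ᵇ ℝ, L χ = -(c⁻¹) * g χ := by
    intro χ
    rw [hL]
    simp [ContinuousLinearMap.smul_apply, smul_eq_mul]
  have hsub : ∀ χ : X →ᵇ ℝ, Γ φ + (L χ - L φ) ≤ Γ χ := by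
    intro χ
    have hk := hkey χ
    rw [hLval, hLval]
    have h2 : c⁻¹ * (g φ - g χ) ≤ Γ χ - Γ φ := by
      rw [inv_mul_le_iff₀ hc]
      linarith [hk]
    linarith [h2]
  have hone : L 1 = 1 := by
    have h : ∀ c' : ℝ, c' * L 1 ≤ c' := by
      intro c'
      have := hsub (φ + BoundedContinuousFunction.const X c')
      rw [htrans] at this
      have hLc : L (φ + BoundedContinuousFunction.const X c') = L φ + c' * L 1 := by
        rw [map_add, const_eq_smul_one, L.map_smul, smul_eq_mul]
      rw [hLc] at this
      linarith
    have h1 := h 1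
    have h2 := h (-1)
    simp only [one_mul, neg_one_mul, neg_le_neg_iff] at h1 h2
    linarith
  have hpos : ∀ ψ : X →ᵇ ℝ, (∀ x, 0 ≤ ψ x) → 0 ≤ L ψ := by
    intro ψ hψ
    have hm : Γ (φ - ψ) ≤ Γ φ := by
      apply hmono
      intro x
      simp only [BoundedContinuousFunction.coe_sub, Pi.sub_apply]
      linarith [hψ x]
    have := hsub (φ - ψ)
    rw [map_sub] at this
    linarith
  exact ⟨L, ⟨hpos, hone⟩, hsub⟩

/-- Variational principle over finitely additive probability measures
(positive normalized continuous linear functionals on `C_b(X)`): the supremum of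
`𝔥(L) + L(φ)` is attained and equals `Γ(φ)`. -/
theorem pressure_variational_principle_Cb {X : Type*} [MetricSpace X] [Nonempty X]
    (Γ : (X →ᵇ ℝ) → ℝ) (hΓ : IsPressureFunctionCb Γ) (φ : X →ᵇ ℝ) :
    ∃ L : (X →ᵇ ℝ) →L[ℝ] ℝ, IsPosNormalized L ∧
      entropyLikeCb Γ L + ((L φ : ℝ) : EReal) = (Γ φ : EReal) ∧
      ∀ L' : (X →ᵇ ℝ) →L[ℝ] ℝ, IsPosNormalized L' →
        entropyLikeCb Γ L' + ((L' φ : ℝ) : EReal) ≤ (Γ φ : EReal) := by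
  obtain ⟨hmono, htrans, hconv⟩ := hΓ
  -- distinguished witness: ψ₀ = const (Γ φ) - φ
  set ψ₀ : X →ᵇ ℝ := BoundedContinuousFunction.const X (Γ φ) - φ with hψ₀
  have hψ₀mem : Γ (-ψ₀) ≤ 0 := by
    have heq : -ψ₀ = φ + BoundedContinuousFunction.const X (-(Γ φ)) := by
      ext x; simp [hψ₀]; ring
    rw [heq, htrans]
    linarith
  have hLψ₀ : ∀ L : (X →ᵇ ℝ) →L[ℝ] ℝ, L 1 = 1 → L ψ₀ = Γ φ - L φ := by
    intro L hL1
    rw [hψ₀, map_sub, const_eq_smul_one, L.map_smul, smul_eq_mul, hL1, mul_one]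
  -- the entropy of any normalized functional is at most Γ φ - L φ
  have hub : ∀ L : (X →ᵇ ℝ) →L[ℝ] ℝ, L 1 = 1 →
      entropyLikeCb Γ L ≤ ((Γ φ - L φ : ℝ) : EReal) := by
    intro L hL1
    apply sInf_le
    exact ⟨ψ₀, hψ₀mem, by rw [hLψ₀ L hL1]⟩
  obtain ⟨L, hLpn, hsub⟩ := exists_subgradient ⟨hmono, htrans, hconv⟩ φ
  have hlb : ((Γ φ - L φ : ℝ) : EReal) ≤ entropyLikeCb Γ L := by
    apply le_sInf
    rintro r ⟨ψ, hψ, rfl⟩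
    rw [EReal.coe_le_coe_iff]
    have h1 := hsub (-ψ)
    rw [map_neg] at h1
    linarith
  have hent : entropyLikeCb Γ L = ((Γ φ - L φ : ℝ) : EReal) :=
    le_antisymm (hub L hLpn.2) hlb
  refine ⟨L, hLpn, ?_, ?_⟩
  · rw [hent, ← EReal.coe_add]
    norm_num
  · intro L' hL'
    calc entropyLikeCb Γ L' + ((L' φ : ℝ) : EReal)
        ≤ ((Γ φ - L' φ : ℝ) : EReal) + ((L' φ : ℝ) : EReal) :=
          add_le_add (hub L' hL'.2) le_rfl
      _ = (Γ φ : EReal) := by rw [← EReal.coe_add]; norm_num
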